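/- Let A be the category whose objects are subspatial equivalence spans on T0 topological spaces and whose morphisms are graph homomorphisms (pairs of continuous maps commuting with sources and targets). Let 𝕀 be the interval-like groupoid: the subspatial equivalence span with I0 = {0, 1} discrete and I1 = I0 × I0 with the projections. Then the category Equ of equilogical spaces is equivalent to the homotopical quotient of A by 𝕀, i.e. to the quotient category of A by the congruence identifying homomorphisms (f1, f0) and (g1, g0) : A → B whenever there exists a homomorphism (K1, K0) : A × 𝕀 → B with K0(x, 0) = f0(x), K0(x, 1) = g0(x), K1(a, (0, 0)) = f1(a) and K1(a, (1, 1)) = g1(a). -/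

import Mathlib

open CategoryTheory Topology

/-- An equilogical space: a T0 topological space together with an equivalence
relation on its points. -/
structure EquSpace : Type 1 where
  carrier : Type
  [top : TopologicalSpace carrier]
  [t0 : T0Space carrier]
  eqv : Setoid carrier

attribute [instance] EquSpace.top EquSpace.t0

/-- A representative of a map of equilogical spaces: a continuous function
preserving the equivalence relations. -/
structure EquHomRep (E F : EquSpace) : Type where
  toFun : E.carrier → F.carrier
  continuous : Continuous toFun
  preserves : ∀ x y : E.carrier, E.eqv.r x y → F.eqv.r (toFun x) (toFun y)

/-- Two representatives are equivalent when they are pointwise related. -/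
def equHomSetoid (E F : EquSpace) : Setoid (EquHomRep E F) where
  r f g := ∀ x : E.carrier, F.eqv.r (f.toFun x) (g.toFun x)
  iseqv := by
    constructor
    · intro f x; exact F.eqv.refl _
    · intro f g h x; exact F.eqv.symm (h x)
    · intro f g h hfg hgh x; exact F.eqv.trans (hfg x) (hgh x)

/-- The identity representative. -/
def EquHomRep.id (E : EquSpace) : EquHomRep E E :=
  ⟨fun x => x, continuous_id, fun _ _ h => h⟩

/-- Composition of representatives. -/
def EquHomRep.comp {E F G : EquSpace} (f : EquHomRep E F) (g : EquHomRep F G) :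
    EquHomRep E G :=
  ⟨fun x => g.toFun (f.toFun x), g.continuous.comp f.continuous,
    fun _ _ h => g.preserves _ _ (f.preserves _ _ h)⟩

/-- The category `Equ` of equilogical spaces: maps are equivalence classes of
relation-preserving continuous functions. -/
instance : Category EquSpace where
  Hom E F := Quotient (equHomSetoid E F)
  id E := ⟦EquHomRep.id E⟧
  comp {E F G} f g :=
    Quotient.liftOn₂ f g (fun f g => ⟦f.comp g⟧) (by
      intro f g f' g' hf hg
      apply Quotient.sound
      intro x
      exact G.eqv.trans (hg _) (g'.preserves _ _ (hf x)))
  id_comp f := Quotient.inductionOn f fun _ => rfl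
  comp_id f := Quotient.inductionOn f fun _ => rfl
  assoc f g h := Quotient.inductionOn₃ f g h fun _ _ _ => rfl

/-- The structure maps making `d1, d2 : A1 → A0` an equivalence span of
topological spaces. -/
structure SpanStruct {A1 A0 : Type} [TopologicalSpace A1] [TopologicalSpace A0]
    (d1 d2 : A1 → A0) where
  r : A0 → A1
  s : A1 → A1
  t : {p : A1 × A1 // d2 p.1 = d1 p.2} → A1
  cont_r : Continuous r
  cont_s : Continuous s
  cont_t : Continuous t
  d1_r : ∀ x, d1 (r x) = x
  d2_r : ∀ x, d2 (r x) = x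
  d1_s : ∀ a, d1 (s a) = d2 a
  d2_s : ∀ a, d2 (s a) = d1 a
  d1_t : ∀ p, d1 (t p) = d1 p.1.1
  d2_t : ∀ p, d2 (t p) = d2 p.1.2

/-- An object of the category `A`: a subspatial equivalence span on T0
topological spaces. -/
structure SubSpanCat : Type 1 where
  A0 : Type
  A1 : Type
  [top0 : TopologicalSpace A0]
  [top1 : TopologicalSpace A1]
  [t0s0 : T0Space A0]
  [t0s1 : T0Space A1]
  d1 : A1 → A0
  d2 : A1 → A0
  cd1 : Continuous d1
  cd2 : Continuous d2
  emb : IsEmbedding fun a => (d1 a, d2 a)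
  str : SpanStruct d1 d2

attribute [instance] SubSpanCat.top0 SubSpanCat.top1 SubSpanCat.t0s0 SubSpanCat.t0s1

/-- A graph homomorphism of spans: a pair of continuous maps commuting with
sources and targets. -/
structure SpanHom (A B : SubSpanCat) : Type where
  f0 : A.A0 → B.A0
  f1 : A.A1 → B.A1
  cont0 : Continuous f0
  cont1 : Continuous f1
  comm1 : ∀ a, B.d1 (f1 a) = f0 (A.d1 a)
  comm2 : ∀ a, B.d2 (f1 a) = f0 (A.d2 a)

/-- The category `A` of subspatial equivalence spans on T0 spaces and graph
homomorphisms. -/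
instance : Category SubSpanCat where
  Hom A B := SpanHom A B
  id A := ⟨fun x => x, fun a => a, continuous_id, continuous_id,
    fun _ => rfl, fun _ => rfl⟩
  comp {A B C} f g :=
    ⟨fun x => g.f0 (f.f0 x), fun a => g.f1 (f.f1 a),
      g.cont0.comp f.cont0, g.cont1.comp f.cont1,
      fun a => (g.comm1 (f.f1 a)).trans (congrArg g.f0 (f.comm1 a)),
      fun a => (g.comm2 (f.f1 a)).trans (congrArg g.f0 (f.comm2 a))⟩

/-- The interval-like groupoid `𝕀`: two objects, exactly one arrow between any
pair of objects, everything discrete. -/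
def interval : SubSpanCat where
  A0 := Bool
  A1 := Bool × Bool
  d1 := Prod.fst
  d2 := Prod.snd
  cd1 := continuous_fst
  cd2 := continuous_snd
  emb := IsEmbedding.id
  str :=
    { r := fun x => (x, x)
      s := fun p => (p.2, p.1)
      t := fun p => (p.1.1.1, p.1.2.2)
      cont_r := continuous_of_discreteTopology
      cont_s := continuous_of_discreteTopology
      cont_t := continuous_of_discreteTopology
      d1_r := fun _ => rfl
      d2_r := fun _ => rfl
      d1_s := fun _ => rfl
      d2_s := fun _ => rfl
      d1_t := fun _ => rfl
      d2_t := fun _ => rfl }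

/-- The componentwise product span `A × 𝕀`. -/
def prodInterval (A : SubSpanCat) : SubSpanCat where
  A0 := A.A0 × Bool
  A1 := A.A1 × (Bool × Bool)
  d1 := fun p => (A.d1 p.1, p.2.1)
  d2 := fun p => (A.d2 p.1, p.2.2)
  cd1 := (A.cd1.comp continuous_fst).prodMk (continuous_fst.comp continuous_snd)
  cd2 := (A.cd2.comp continuous_fst).prodMk (continuous_snd.comp continuous_snd)
  emb := by
    have h := (Homeomorph.prodProdProdComm A.A0 A.A0 Bool Bool).isEmbedding.comp
      (A.emb.prodMap (IsEmbedding.id (X := Bool × Bool)))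
    convert h using 2
    all_goals rfl
  str :=
    { r := fun p => (A.str.r p.1, (p.2, p.2))
      s := fun q => (A.str.s q.1, (q.2.2, q.2.1))
      t := fun p =>
        (A.str.t ⟨(p.1.1.1, p.1.2.1), congrArg Prod.fst p.2⟩,
          (p.1.1.2.1, p.1.2.2.2))
      cont_r := (A.str.cont_r.comp continuous_fst).prodMk
        (continuous_snd.prodMk continuous_snd)
      cont_s := (A.str.cont_s.comp continuous_fst).prodMk
        ((continuous_snd.comp continuous_snd).prodMk
          (continuous_fst.comp continuous_snd))
      cont_t := by
        have hval : Continuous fun p : {p : (A.A1 × (Bool × Bool)) × (A.A1 × (Bool × Bool)) //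
            (A.d2 p.1.1, p.1.2.2) = (A.d1 p.2.1, p.2.2.1)} =>
            (p : (A.A1 × (Bool × Bool)) × (A.A1 × (Bool × Bool))) :=
          continuous_subtype_val
        exact (A.str.cont_t.comp
          (((hval.fst.fst).prodMk (hval.snd.fst)).subtype_mk _)).prodMk
          ((hval.fst.snd.fst).prodMk (hval.snd.snd.snd))
      d1_r := fun p => by show (A.d1 (A.str.r p.1), p.2) = p; rw [A.str.d1_r]
      d2_r := fun p => by show (A.d2 (A.str.r p.1), p.2) = p; rw [A.str.d2_r]
      d1_s := fun q => by show (A.d1 (A.str.s q.1), q.2.2) = _; rw [A.str.d1_s]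
      d2_s := fun q => by show (A.d2 (A.str.s q.1), q.2.1) = _; rw [A.str.d2_s]
      d1_t := fun p => by
        show (A.d1 (A.str.t _), p.1.1.2.1) = (A.d1 p.1.1.1, p.1.1.2.1)
        rw [A.str.d1_t]
      d2_t := fun p => by
        show (A.d2 (A.str.t _), p.1.2.2.2) = (A.d2 p.1.2.1, p.1.2.2.2)
        rw [A.str.d2_t] }

/-- The homotopy relation determined by the interval `𝕀`: two homomorphisms
`f, g : A ⟶ B` are identified when there is a homomorphism
`K : A × 𝕀 ⟶ B` restricting to `f` at `0` and to `g` at `1`, on objects and on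
arrows. -/
def htpyRel : HomRel SubSpanCat := fun {A B} f g =>
  ∃ K : prodInterval A ⟶ B,
    (∀ x : A.A0, K.f0 (x, false) = f.f0 x) ∧
    (∀ x : A.A0, K.f0 (x, true) = g.f0 x) ∧
    (∀ a : A.A1, K.f1 (a, (false, false)) = f.f1 a) ∧
    (∀ a : A.A1, K.f1 (a, (true, true)) = g.f1 a)

/-! ### Auxiliary constructions for the proof -/

theorem SpanHom.ext' {A B : SubSpanCat} {f g : SpanHom A B}
    (h0 : f.f0 = g.f0) (h1 : f.f1 = g.f1) : f = g := by
  cases f; cases g; cases h0; cases h1; rfl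

/-- The setoid on `A.A0` induced by the span. -/
def spanRel (A : SubSpanCat) : Setoid A.A0 where
  r x y := ∃ a, A.d1 a = x ∧ A.d2 a = y
  iseqv := by
    constructor
    · intro x; exact ⟨A.str.r x, A.str.d1_r x, A.str.d2_r x⟩
    · rintro x y ⟨a, rfl, rfl⟩
      exact ⟨A.str.s a, A.str.d1_s a, A.str.d2_s a⟩
    · rintro x y z ⟨a, rfl, rfl⟩ ⟨b, hb1, rfl⟩
      exact ⟨A.str.t ⟨(a, b), hb1.symm⟩, A.str.d1_t _, A.str.d2_t _⟩

/-- The equilogical space associated to a span. -/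
def Fobj (A : SubSpanCat) : EquSpace :=
  { carrier := A.A0, eqv := spanRel A }

/-- Representative of the equilogical map associated to a span homomorphism. -/
def Fmaprep {A B : SubSpanCat} (h : SpanHom A B) : EquHomRep (Fobj A) (Fobj B) where
  toFun := h.f0
  continuous := h.cont0
  preserves := by
    rintro x y ⟨a, rfl, rfl⟩
    exact ⟨h.f1 a, h.comm1 a, h.comm2 a⟩

/-- The functor from spans to equilogical spaces. -/
def Ffun : SubSpanCat ⥤ EquSpace where
  obj := Fobj
  map h := ⟦Fmaprep h⟧
  map_id A := rfl
  map_comp f g := rfl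

theorem F_respects : ∀ ⦃A B : SubSpanCat⦄ (f g : A ⟶ B),
    htpyRel f g → Ffun.map f = Ffun.map g := by
  rintro A B f g ⟨K, h0, h1, -, -⟩
  apply Quotient.sound
  intro x
  refine ⟨K.f1 (A.str.r x, (false, true)), ?_, ?_⟩
  · erw [K.comm1]
    show K.f0 (A.d1 (A.str.r x), false) = _
    erw [A.str.d1_r, h0]; rfl
  · erw [K.comm2]
    show K.f0 (A.d2 (A.str.r x), true) = _
    erw [A.str.d2_r, h1]; rfl

/-- The span associated to an equilogical space. -/
def Gobj (E : EquSpace) : SubSpanCat where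
  A0 := E.carrier
  A1 := { p : E.carrier × E.carrier // E.eqv.r p.1 p.2 }
  d1 := fun a => a.1.1
  d2 := fun a => a.1.2
  cd1 := continuous_subtype_val.fst
  cd2 := continuous_subtype_val.snd
  emb := IsEmbedding.subtypeVal
  str :=
    { r := fun x => ⟨(x, x), E.eqv.refl x⟩
      s := fun a => ⟨(a.1.2, a.1.1), E.eqv.symm a.2⟩
      t := fun p => ⟨(p.1.1.1.1, p.1.2.1.2),
        E.eqv.trans p.1.1.2 (by rw [show p.1.1.1.2 = p.1.2.1.1 from p.2]; exact p.1.2.2)⟩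
      cont_r := (continuous_id.prodMk continuous_id).subtype_mk _
      cont_s := ((continuous_subtype_val.snd).prodMk
        (continuous_subtype_val.fst)).subtype_mk _
      cont_t := by
        have hv : Continuous fun p : { q : ({ p : E.carrier × E.carrier // E.eqv.r p.1 p.2 } ×
            { p : E.carrier × E.carrier // E.eqv.r p.1 p.2 }) // q.1.1.2 = q.2.1.1 } =>
            p.1 := continuous_subtype_val
        exact ((hv.fst.subtype_val.fst).prodMk (hv.snd.subtype_val.snd)).subtype_mk _
      d1_r := fun _ => rfl
      d2_r := fun _ => rfl
      d1_s := fun _ => rfl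
      d2_s := fun _ => rfl
      d1_t := fun _ => rfl
      d2_t := fun _ => rfl }

/-- Representative-level action of `G` on maps. -/
def Grep {E F : EquSpace} (h : EquHomRep E F) : SpanHom (Gobj E) (Gobj F) where
  f0 := h.toFun
  f1 := fun a => ⟨(h.toFun a.1.1, h.toFun a.1.2), h.preserves _ _ a.2⟩
  cont0 := h.continuous
  cont1 := ((h.continuous.comp continuous_subtype_val.fst).prodMk
    (h.continuous.comp continuous_subtype_val.snd)).subtype_mk _
  comm1 := fun _ => rfl
  comm2 := fun _ => rfl

theorem cond_continuous {X Z : Type} [TopologicalSpace X] [TopologicalSpace Z]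
    (f g : X → Z) (hf : Continuous f) (hg : Continuous g) {b : X → Bool}
    (hb : Continuous b) : Continuous fun x => cond (b x) (g x) (f x) := by
  have hcl : IsClopen { x | b x = true } :=
    (isClopen_discrete {true}).preimage hb
  have : Continuous fun x => if b x = true then g x else f x := by
    refine Continuous.if ?_ hg hf
    intro a ha
    rw [hcl.frontier_eq] at ha
    exact absurd ha (Set.notMem_empty a)
  convert this using 1
  funext x
  cases hb' : b x <;> simp

/-- Equivalent representatives give homotopic span homomorphisms. -/
theorem Grep_htpy {E F : EquSpace} (f g : EquHomRep E F)
    (hfg : ∀ x, F.eqv.r (f.toFun x) (g.toFun x)) :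
    htpyRel (Grep f) (Grep g) := by
  have key : ∀ (b1 b2 : Bool) (a : (Gobj E).A1),
      F.eqv.r (cond b1 (g.toFun a.1.1) (f.toFun a.1.1))
        (cond b2 (g.toFun a.1.2) (f.toFun a.1.2)) := by
    intro b1 b2 a
    cases b1 <;> cases b2 <;> simp only [cond]
    · exact f.preserves _ _ a.2
    · exact F.eqv.trans (f.preserves _ _ a.2) (hfg a.1.2)
    · exact F.eqv.trans (F.eqv.symm (hfg a.1.1)) (f.preserves _ _ a.2)
    · exact g.preserves _ _ a.2
  refine ⟨{ f0 := fun p => cond p.2 (g.toFun p.1) (f.toFun p.1)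
            f1 := fun p => ⟨(cond p.2.1 (g.toFun p.1.1.1) (f.toFun p.1.1.1),
              cond p.2.2 (g.toFun p.1.1.2) (f.toFun p.1.1.2)), key p.2.1 p.2.2 p.1⟩
            cont0 := cond_continuous _ _ (f.continuous.comp continuous_fst)
              (g.continuous.comp continuous_fst) continuous_snd
            cont1 := ((cond_continuous _ _
                (f.continuous.comp (continuous_subtype_val.fst.comp continuous_fst))
                (g.continuous.comp (continuous_subtype_val.fst.comp continuous_fst))
                (continuous_fst.comp continuous_snd)).prodMk
              (cond_continuous _ _
                (f.continuous.comp (continuous_subtype_val.snd.comp continuous_fst))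
                (g.continuous.comp (continuous_subtype_val.snd.comp continuous_fst))
                (continuous_snd.comp continuous_snd))).subtype_mk _
            comm1 := fun _ => rfl
            comm2 := fun _ => rfl },
    fun _ => rfl, fun _ => rfl, fun _ => rfl, fun _ => rfl⟩

open CategoryTheory.Quotient in
/-- The functor from equilogical spaces to the homotopical quotient. -/
def Gfun : EquSpace ⥤ CategoryTheory.Quotient htpyRel where
  obj E := (functor htpyRel).obj (Gobj E)
  map {E F} φ := Quotient.liftOn φ (fun h => (functor htpyRel).map (Grep h)) (by
    intro f g hfg
    exact CategoryTheory.Quotient.sound htpyRel (Grep_htpy f g hfg))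
  map_id E := rfl
  map_comp {E F G} φ ψ := Quotient.inductionOn₂ φ ψ (fun f g => rfl)
/-- The comparison iso `A ≅ G (F A)` in `SubSpanCat`. -/
noncomputable def etaIso (A : SubSpanCat) : A ≅ Gobj (Fobj A) := by
  have hset : { p : A.A0 × A.A0 | (spanRel A).r p.1 p.2 } =
      Set.range (fun a => (A.d1 a, A.d2 a)) := by
    ext p
    constructor
    · rintro ⟨a, h1, h2⟩
      refine ⟨a, ?_⟩
      show (A.d1 a, A.d2 a) = p
      rw [h1, h2]
    · rintro ⟨a, ha⟩
      exact ⟨a, congrArg Prod.fst ha, congrArg Prod.snd ha⟩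
  let e : A.A1 ≃ₜ Set.range (fun a => (A.d1 a, A.d2 a)) :=
    A.emb.toHomeomorph
  let c : (Gobj (Fobj A)).A1 ≃ₜ Set.range (fun a => (A.d1 a, A.d2 a)) :=
    Homeomorph.setCongr hset
  have he : ∀ a : A.A1, ((e a : Set.range fun a => (A.d1 a, A.d2 a)) : A.A0 × A.A0)
      = (A.d1 a, A.d2 a) := fun a => rfl
  refine
    { hom :=
        { f0 := fun x => x
          f1 := fun a => ⟨(A.d1 a, A.d2 a), ⟨a, rfl, rfl⟩⟩
          cont0 := continuous_id
          cont1 := (A.cd1.prodMk A.cd2).subtype_mk _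
          comm1 := fun _ => rfl
          comm2 := fun _ => rfl }
      inv :=
        { f0 := fun x => x
          f1 := fun p => e.symm (c p)
          cont0 := continuous_id
          cont1 := e.symm.continuous.comp c.continuous
          comm1 := ?_
          comm2 := ?_ }
      hom_inv_id := ?_
      inv_hom_id := ?_ }
  · intro p
    show A.d1 (e.symm (c p)) = p.1.1
    have : (A.d1 (e.symm (c p)), A.d2 (e.symm (c p))) = (p.1.1, p.1.2) := by
      rw [← he (e.symm (c p)), e.apply_symm_apply]
      rfl
    exact congrArg Prod.fst this
  · intro p
    show A.d2 (e.symm (c p)) = p.1.2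
    have : (A.d1 (e.symm (c p)), A.d2 (e.symm (c p))) = (p.1.1, p.1.2) := by
      rw [← he (e.symm (c p)), e.apply_symm_apply]
      rfl
    exact congrArg Prod.snd this
  · refine SpanHom.ext' rfl (funext fun a => ?_)
    show e.symm (c ⟨(A.d1 a, A.d2 a), _⟩) = a
    have : c ⟨(A.d1 a, A.d2 a), ⟨a, rfl, rfl⟩⟩ = e a := rfl
    rw [this, e.symm_apply_apply]
  · refine SpanHom.ext' rfl (funext fun p => ?_)
    apply Subtype.ext
    show (A.d1 (e.symm (c p)), A.d2 (e.symm (c p))) = p.1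
    rw [← he (e.symm (c p)), e.apply_symm_apply]
    rfl

/-- Naturality of `etaIso` in `SubSpanCat`. -/
theorem etaIso_natural {A B : SubSpanCat} (h : A ⟶ B) :
    h ≫ (etaIso B).hom = (etaIso A).hom ≫ Grep (Fmaprep h) := by
  refine SpanHom.ext' rfl (funext fun a => ?_)
  apply Subtype.ext
  show (B.d1 (h.f1 a), B.d2 (h.f1 a)) = (h.f0 (A.d1 a), h.f0 (A.d2 a))
  rw [h.comm1, h.comm2]

/-- The comparison iso `F (G E) ≅ E` in `EquSpace`. -/
def epsIso (E : EquSpace) : Fobj (Gobj E) ≅ E where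
  hom := (⟦{ toFun := fun x => x
             continuous := continuous_id
             preserves := by
               rintro x y ⟨a, h1, h2⟩
               rw [← h1, ← h2]
               exact a.2 }⟧ : Fobj (Gobj E) ⟶ E)
  inv := (⟦{ toFun := fun x => x
             continuous := continuous_id
             preserves := by
               intro x y hxy
               exact ⟨⟨(x, y), hxy⟩, rfl, rfl⟩ }⟧ : E ⟶ Fobj (Gobj E))
  hom_inv_id := Quotient.sound fun x => (spanRel (Gobj E)).refl x
  inv_hom_id := Quotient.sound fun x => E.eqv.refl x

/-- the category `Equ` of equilogical spaces is equivalent to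
the homotopical quotient of the category `A` of subspatial equivalence spans
on T0 spaces by the interval-like groupoid `𝕀`. -/
theorem equ_is_homotopical_quotient :
    Nonempty (CategoryTheory.Quotient htpyRel ≌ EquSpace) := by
  classical
  let Q := CategoryTheory.Quotient.functor htpyRel
  let Fbar : CategoryTheory.Quotient htpyRel ⥤ EquSpace :=
    CategoryTheory.Quotient.lift htpyRel Ffun F_respects
  refine ⟨CategoryTheory.Equivalence.mk Fbar Gfun ?_ ?_⟩
  · -- unit : 𝟭 ≅ Fbar ⋙ Gfun
    refine NatIso.ofComponents (fun X => Q.mapIso (etaIso X.as)) ?_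
    intro X Y f
    induction f using Quot.ind with
    | _ h =>
      show Q.map h ≫ Q.map (etaIso Y.as).hom =
        Q.map (etaIso X.as).hom ≫ Q.map (Grep (Fmaprep h))
      rw [← Q.map_comp, ← Q.map_comp, etaIso_natural]
  · -- counit : Gfun ⋙ Fbar ≅ 𝟭
    refine NatIso.ofComponents (fun E => epsIso E) ?_
    intro E F φ
    induction φ using Quotient.inductionOn with
    | _ h =>
      show (⟦Fmaprep (Grep h)⟧ : Fobj (Gobj E) ⟶ Fobj (Gobj F)) ≫ (epsIso F).hom =
        (epsIso E).hom ≫ ⟦h⟧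
      apply Quotient.sound
      intro x
      exact F.eqv.refl _
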